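/- For n = 2m, the matrices Φ_{p,q}(e_i) satisfy the Clifford relations Φ_{p,q}(e_i)Φ_{p,q}(e_j) + Φ_{p,q}(e_j)Φ_{p,q}(e_i) = −2⟨e_i,e_j⟩_{p,q}·Id for all i,j, and the induced algebra homomorphism from the complexified Clifford algebra Cl^ℂ_{p,q} to the matrix algebra M_{2^m}(ℂ) is an isomorphism of complex algebras. -/
import Mathlib


open Complex Matrix

namespace Paper

noncomputable section

/-- The 2×2 generator matrices of Remark 2.1. -/
def matE : Matrix (Fin 2) (Fin 2) ℂ := 1
def matT : Matrix (Fin 2) (Fin 2) ℂ := !![-1, 0; 0, 1]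
def matG1 : Matrix (Fin 2) (Fin 2) ℂ := !![0, Complex.I; Complex.I, 0]
def matG2 : Matrix (Fin 2) (Fin 2) ℂ := !![0, -1; 1, 0]

/-- Iterated Kronecker product of 2×2 matrices, realised on the index type `Fin m → Fin 2`
(the slot `ν` corresponds to the `(ν+1)`-st label of the basis spinors `u(ε₁,…,ε_m)`,
i.e. the Kronecker factors are taken from right to left). -/
def tprod {m : ℕ} (M : Fin m → Matrix (Fin 2) (Fin 2) ℂ) :
    Matrix (Fin m → Fin 2) (Fin m → Fin 2) ℂ :=
  Matrix.of fun a b => ∏ ν, M ν (a ν) (b ν)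

/-- `τ_j = 1` if `ε_j = 1` and `τ_j = i` if `ε_j = -1`. -/
def tau {n : ℕ} (ε : Fin n → ℝ) (j : Fin n) : ℂ := if ε j = 1 then 1 else Complex.I

/-- The matrices `Φ_{p,q}(e_i)` of the explicit Clifford representation of Remark 2.1
(0-based index `i`; the paper's `e_{2j-1}` resp. `e_{2j}` correspond to `i = 2j-2` resp.
`i = 2j-1`, acting by `g₁` resp. `g₂` in slot `j-1`, by `T` in the lower slots and by `E`
in the higher slots).  For odd `n` the last matrix is the first component
`pr₁ ∘ Φ̃ (e_n) = τ_n · (i T ⊗ ⋯ ⊗ T)`. -/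
def Phi {n : ℕ} (ε : Fin n → ℝ) (i : Fin n) :
    Matrix (Fin (n / 2) → Fin 2) (Fin (n / 2) → Fin 2) ℂ :=
  tau ε i •
    if i.val < 2 * (n / 2) then
      tprod fun ν : Fin (n / 2) =>
        if ν.val < i.val / 2 then matT
        else if ν.val = i.val / 2 then (if i.val % 2 = 0 then matG1 else matG2)
        else matE
    else Complex.I • tprod fun _ : Fin (n / 2) => matT

/-- The spinor module `Δ_{p,q} = ℂ^{2^{⌊n/2⌋}}`. -/
abbrev Spinor (n : ℕ) := (Fin (n / 2) → Fin 2) → ℂ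

/-- Clifford multiplication by a real vector, as a matrix. -/
def cliffR {n : ℕ} (ε : Fin n → ℝ) (x : Fin n → ℝ) :
    Matrix (Fin (n / 2) → Fin 2) (Fin (n / 2) → Fin 2) ℂ :=
  ∑ i, (x i : ℂ) • Phi ε i

/-- Clifford multiplication by a complex vector (complex-bilinear extension). -/
def cliffC {n : ℕ} (ε : Fin n → ℝ) (x : Fin n → ℂ) :
    Matrix (Fin (n / 2) → Fin 2) (Fin (n / 2) → Fin 2) ℂ :=
  ∑ i, x i • Phi ε i

/-- The scalar product `⟨x,y⟩_{p,q} = ∑ ε_i x_i y_i` on `ℝⁿ`. -/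
def ipR {n : ℕ} (ε : Fin n → ℝ) (x y : Fin n → ℝ) : ℝ := ∑ i, ε i * x i * y i

/-- Its complex-bilinear extension to `ℂⁿ`. -/
def ipC {n : ℕ} (ε : Fin n → ℝ) (x y : Fin n → ℂ) : ℂ := ∑ i, (ε i : ℂ) * x i * y i

/-- The standard Hermitian scalar product on the spinor module. -/
def stdInner {n : ℕ} (u v : Spinor n) : ℂ := ∑ b, (starRingEnd ℂ) (u b) * v b

/-- Clifford multiplication by the product `e_{i₁} ⋯ e_{i_k}` over a set of indices
`s = {i₁ < … < i_k}`, taken in increasing order. -/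
def cliffSet {n : ℕ} (ε : Fin n → ℝ) (s : Finset (Fin n)) :
    Matrix (Fin (n / 2) → Fin 2) (Fin (n / 2) → Fin 2) ℂ :=
  ((s.sort (· ≤ ·)).map (Phi ε)).prod

/-- The set of indices with `ε_i = -1`. -/
def negSet {n : ℕ} (ε : Fin n → ℝ) : Finset (Fin n) := Finset.univ.filter fun i => ε i = -1

/-- The indefinite spinor inner product `⟨u,v⟩_Δ = d · (e_{i₁} ⋯ e_{i_p} · u, v)`,
where `i₁ < … < i_p` are the indices with `ε = -1`. -/
def sform {n : ℕ} (ε : Fin n → ℝ) (d : ℂ) (u v : Spinor n) : ℂ :=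
  d * stdInner ((cliffSet ε (negSet ε)).mulVec u) v

/-- The coefficient `d_{k,p} · ε_{i₁} ⋯ ε_{i_k} · ⟨e_{i₁} ⋯ e_{i_k} · χ, χ⟩_Δ` of the
algebraic Dirac form (`dD` is the constant of the spinor inner product, `dk` is `d_{k,p}`). -/
def dCoeff {n : ℕ} (ε : Fin n → ℝ) (dD dk : ℂ) (s : Finset (Fin n)) (χ : Spinor n) : ℂ :=
  dk * (∏ i ∈ s, (ε i : ℂ)) * sform ε dD ((cliffSet ε s).mulVec χ) χ

/-- The covector `X^♭ = ⟨X,·⟩_{p,q}`. -/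
def flat {n : ℕ} (ε : Fin n → ℝ) (X : Fin n → ℝ) : (Fin n → ℝ) →ₗ[ℝ] ℝ :=
  ∑ i, (ε i * X i) • LinearMap.proj i

/-- The wedge product of `k` one-forms, as an alternating `k`-form. -/
def wedge1 {n k : ℕ} (f : Fin k → ((Fin n → ℝ) →ₗ[ℝ] ℝ)) :
    AlternatingMap ℝ (Fin n → ℝ) ℝ (Fin k) :=
  (Matrix.detRowAlternating : AlternatingMap ℝ (Fin k → ℝ) ℝ (Fin k)).compLinearMap
    (LinearMap.pi f)

/-- The algebraic Dirac `k`-form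
`α^k_χ = d_{k,p} ∑_{i₁<⋯<i_k} ε_{i₁}⋯ε_{i_k} ⟨e_{i₁}⋯e_{i_k}·χ, χ⟩_Δ e^♭_{i₁} ∧ ⋯ ∧ e^♭_{i_k}`
(a real form; the coefficients are real by the choice of the constant `dk = d_{k,p}`). -/
def diracForm {n : ℕ} (ε : Fin n → ℝ) (dD dk : ℂ) (k : ℕ) (χ : Spinor n) :
    AlternatingMap ℝ (Fin n → ℝ) ℝ (Fin k) :=
  ∑ s : Finset (Fin n),
    if h : s.card = k then
      (dCoeff ε dD dk s χ).re •
        wedge1 fun j => flat ε (Pi.single (s.orderEmbOfFin h j) 1)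
    else 0

/-- The wedge product of `j` one-forms with a `(p-j)`-form, as an alternating `p`-form. -/
def wedgeMix {n p j : ℕ} (h : j ≤ p) (f : Fin j → ((Fin n → ℝ) →ₗ[ℝ] ℝ))
    (β : AlternatingMap ℝ (Fin n → ℝ) ℝ (Fin (p - j))) :
    AlternatingMap ℝ (Fin n → ℝ) ℝ (Fin p) :=
  AlternatingMap.domDomCongr (finSumFinEquiv.trans (finCongr (by omega)))
    ((TensorProduct.lid ℝ ℝ).toLinearMap.compAlternatingMap ((wedge1 f).domCoprod β))

/-- The basis spinor `u(ε₁,…,ε_m)` (encoded by `a : Fin m → Fin 2`, where `a ν = 0`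
corresponds to the label `ε_{ν+1} = 1` and `a ν = 1` to `ε_{ν+1} = -1`). -/
def uB (n : ℕ) (a : Fin (n / 2) → Fin 2) : Spinor n := fun b => if b = a then 1 else 0


lemma tprod_mul {m : ℕ} (M N : Fin m → Matrix (Fin 2) (Fin 2) ℂ) :
    tprod M * tprod N = tprod (fun ν => M ν * N ν) := by
  ext a b
  simp only [tprod, Matrix.mul_apply, Matrix.of_apply]
  rw [Fintype.prod_sum fun ν j => M ν (a ν) j * N ν j (b ν)]
  exact Finset.sum_congr rfl fun c _ => (Finset.prod_mul_distrib).symm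

lemma tprod_one {m : ℕ} : tprod (fun _ : Fin m => (1 : Matrix (Fin 2) (Fin 2) ℂ)) = 1 := by
  ext a b
  simp only [tprod, Matrix.of_apply, Matrix.one_apply]
  by_cases h : a = b
  · subst h; simp
  · obtain ⟨ν, hν⟩ := Function.ne_iff.mp h
    rw [if_neg h]
    exact Finset.prod_eq_zero (Finset.mem_univ ν) (by simp [Matrix.one_apply, hν])

lemma tprod_eq_neg {m : ℕ} {M N : Fin m → Matrix (Fin 2) (Fin 2) ℂ} (s : Fin m)
    (hs : M s = -(N s)) (h : ∀ ν, ν ≠ s → M ν = N ν) : tprod M = - tprod N := by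
  ext a b
  simp only [tprod, Matrix.of_apply, Matrix.neg_apply]
  rw [← Finset.prod_erase_mul _ _ (Finset.mem_univ s),
      ← Finset.prod_erase_mul _ _ (Finset.mem_univ s)]
  rw [Finset.prod_congr rfl (fun ν hν => by
    rw [h ν (Finset.mem_erase.mp hν).1])]
  rw [hs]; simp [mul_comm]; try ring

lemma matT_sq : matT * matT = 1 := by
  ext i j; fin_cases i <;> fin_cases j <;>
    simp [matE, matT, matG1, matG2, Matrix.mul_fin_two, Matrix.one_apply]

lemma matG1_sq : matG1 * matG1 = -1 := by
  ext i j; fin_cases i <;> fin_cases j <;>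
    simp [matE, matT, matG1, matG2, Matrix.mul_fin_two, Matrix.one_apply, Complex.I_mul_I]

lemma matG2_sq : matG2 * matG2 = -1 := by
  ext i j; fin_cases i <;> fin_cases j <;>
    simp [matE, matT, matG1, matG2, Matrix.mul_fin_two, Matrix.one_apply]

lemma matG1_G2 : matG1 * matG2 = -(matG2 * matG1) := by
  norm_num [matG1, matG2, Matrix.mul_fin_two]

lemma matG1_T : matG1 * matT = -(matT * matG1) := by
  norm_num [matG1, matT, Matrix.mul_fin_two]

lemma matG2_T : matG2 * matT = -(matT * matG2) := by
  norm_num [matG2, matT, Matrix.mul_fin_two]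

lemma matG1_mul_G2 : matG1 * matG2 = (-Complex.I) • matT := by
  ext i j; fin_cases i <;> fin_cases j <;>
    simp [matG1, matG2, matT, Matrix.mul_fin_two]

lemma mem_span4 (B : Matrix (Fin 2) (Fin 2) ℂ) :
    B ∈ Submodule.span ℂ ({matE, matT, matG1, matG2} : Set (Matrix (Fin 2) (Fin 2) ℂ)) := by
  have : B = ((B 0 0 + B 1 1)/2) • matE + ((B 1 1 - B 0 0)/2) • matT
      + ((-Complex.I/2) * (B 0 1 + B 1 0)) • matG1 + ((B 1 0 - B 0 1)/2) • matG2 := by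
    ext i j
    fin_cases i <;> fin_cases j <;>
      simp [matE, matT, matG1, matG2, Matrix.one_apply] <;> ring_nf <;>
      simp [Complex.I_sq] <;> ring
  rw [this]
  have h1 : matE ∈ ({matE, matT, matG1, matG2} : Set (Matrix (Fin 2) (Fin 2) ℂ)) := by simp
  have h2 : matT ∈ ({matE, matT, matG1, matG2} : Set (Matrix (Fin 2) (Fin 2) ℂ)) := by simp
  have h3 : matG1 ∈ ({matE, matT, matG1, matG2} : Set (Matrix (Fin 2) (Fin 2) ℂ)) := by simp
  have h4 : matG2 ∈ ({matE, matT, matG1, matG2} : Set (Matrix (Fin 2) (Fin 2) ℂ)) := by simp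
  exact Submodule.add_mem _ (Submodule.add_mem _ (Submodule.add_mem _
    (Submodule.smul_mem _ _ (Submodule.subset_span h1))
    (Submodule.smul_mem _ _ (Submodule.subset_span h2)))
    (Submodule.smul_mem _ _ (Submodule.subset_span h3)))
    (Submodule.smul_mem _ _ (Submodule.subset_span h4))
/-- slotwise factor of `Phi` in the even case. -/
def FF {n : ℕ} (i : Fin n) (ν : Fin (n / 2)) : Matrix (Fin 2) (Fin 2) ℂ :=
  if ν.val < i.val / 2 then matT
  else if ν.val = i.val / 2 then (if i.val % 2 = 0 then matG1 else matG2)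
  else matE

lemma Phi_eq_even {n : ℕ} (ε : Fin n → ℝ) (i : Fin n) (h2 : i.val < 2 * (n / 2)) :
    Phi ε i = tau ε i • tprod (FF i) := by
  rw [Phi, if_pos h2]; rfl

lemma tau_ne_zero {n : ℕ} (ε : Fin n → ℝ) (i : Fin n) : tau ε i ≠ 0 := by
  unfold tau; split <;> simp [Complex.I_ne_zero]

lemma tprod_FF_anticomm {n : ℕ} (hn : n % 2 = 0) {i j : Fin n} (hij : i.val < j.val) :
    tprod (fun ν => FF i ν * FF j ν) = - tprod (fun ν => FF j ν * FF i ν) := by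
  have hs : i.val / 2 < n / 2 := by have := j.isLt; omega
  apply tprod_eq_neg ⟨i.val / 2, hs⟩
  · -- the anticommuting slot
    have hii : FF i ⟨i.val / 2, hs⟩ = (if i.val % 2 = 0 then matG1 else matG2) := by
      simp [FF]
    by_cases hsame : i.val / 2 = j.val / 2
    · have hi0 : i.val % 2 = 0 := by omega
      have hj1 : j.val % 2 = 1 := by omega
      have hjj : FF j ⟨i.val / 2, hs⟩ = matG2 := by simp [FF, hsame, hj1]
      rw [hii, hjj, if_pos hi0]
      exact matG1_G2
    · have hlt : i.val / 2 < j.val / 2 := by omega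
      have hjj : FF j ⟨i.val / 2, hs⟩ = matT := by simp [FF, hlt]
      rw [hii, hjj]
      by_cases hi0 : i.val % 2 = 0
      · rw [if_pos hi0]; exact matG1_T
      · rw [if_neg hi0]; exact matG2_T
  · intro ν hν
    have hne : ν.val ≠ i.val / 2 := fun h => hν (Fin.ext h)
    by_cases hlt : ν.val < i.val / 2
    · have h1 : FF i ν = matT := by simp [FF, hlt]
      have h2 : FF j ν = matT := by
        have : ν.val < j.val / 2 := by omega
        simp [FF, this]
      rw [h1, h2]
    · have h1 : FF i ν = matE := by simp [FF, hlt, hne]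
      rw [h1]
      show matE * _ = _ * matE
      rw [matE, one_mul, mul_one]

lemma tprod_FF_sq {n : ℕ} (hn : n % 2 = 0) (i : Fin n) :
    tprod (fun ν => FF i ν * FF i ν) = -1 := by
  have hs : i.val / 2 < n / 2 := by have := i.isLt; omega
  have := tprod_eq_neg (M := fun ν => FF i ν * FF i ν)
      (N := fun _ : Fin (n / 2) => (1 : Matrix (Fin 2) (Fin 2) ℂ)) ⟨i.val / 2, hs⟩
    (by
      beta_reduce
      have hii : FF i ⟨i.val / 2, hs⟩ = (if i.val % 2 = 0 then matG1 else matG2) := by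
        simp [FF]
      rw [hii]
      by_cases hi0 : i.val % 2 = 0
      · rw [if_pos hi0]; exact matG1_sq
      · rw [if_neg hi0]; exact matG2_sq)
    (by
      intro ν hν
      beta_reduce
      have hne : ν.val ≠ i.val / 2 := fun h => hν (Fin.ext h)
      by_cases hlt : ν.val < i.val / 2
      · have h1 : FF i ν = matT := by simp [FF, hlt]
        rw [h1]; exact matT_sq
      · have h1 : FF i ν = matE := by simp [FF, hlt, hne]
        rw [h1, matE, one_mul])
  rw [this, tprod_one]

lemma Phi_anticomm {n : ℕ} (hn : n % 2 = 0) (ε : Fin n → ℝ) {i j : Fin n} (hij : i ≠ j) :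
    Phi ε i * Phi ε j = -(Phi ε j * Phi ε i) := by
  have h2 : ∀ k : Fin n, k.val < 2 * (n / 2) := fun k => by have := k.isLt; omega
  rw [Phi_eq_even ε i (h2 i), Phi_eq_even ε j (h2 j)]
  rw [smul_mul_smul_comm, smul_mul_smul_comm, tprod_mul, tprod_mul]
  rcases Nat.lt_or_ge i.val j.val with h | h
  · rw [tprod_FF_anticomm hn h, mul_comm (tau ε j), smul_neg]
  · have hlt : j.val < i.val := by
      rcases Nat.lt_or_ge j.val i.val with h' | h'
      · exact h'
      · exact absurd (Fin.ext (by omega : i.val = j.val)) hij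
    rw [tprod_FF_anticomm hn hlt, smul_neg, neg_neg, mul_comm (tau ε i)]

lemma Phi_sq {n : ℕ} (hn : n % 2 = 0) (ε : Fin n → ℝ) (hε : ∀ i, ε i = 1 ∨ ε i = -1)
    (i : Fin n) : Phi ε i * Phi ε i = (-(ε i : ℂ)) • 1 := by
  have h2 : i.val < 2 * (n / 2) := by have := i.isLt; omega
  rw [Phi_eq_even ε i h2, smul_mul_smul_comm, tprod_mul, tprod_FF_sq hn]
  have htau : tau ε i * tau ε i = (ε i : ℂ) := by
    rcases hε i with h | h <;> norm_num [tau, h, Complex.I_mul_I]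
  rw [htau, smul_neg, neg_smul]
/-- A single 2×2 matrix placed in slot `ν`, identity elsewhere. -/
def Lone {m : ℕ} (ν : Fin m) (B : Matrix (Fin 2) (Fin 2) ℂ) :
    Matrix (Fin m → Fin 2) (Fin m → Fin 2) ℂ :=
  tprod (fun μ => if μ = ν then B else matE)

lemma Lone_smul {m : ℕ} (ν : Fin m) (c : ℂ) (B : Matrix (Fin 2) (Fin 2) ℂ) :
    Lone ν (c • B) = c • Lone ν B := by
  ext a b
  simp only [Lone, tprod, Matrix.of_apply, Matrix.smul_apply, smul_eq_mul]
  rw [← Finset.prod_erase_mul _ _ (Finset.mem_univ ν),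
      ← Finset.prod_erase_mul _ _ (Finset.mem_univ ν)]
  have h : ∀ μ ∈ Finset.univ.erase ν,
      (if μ = ν then c • B else matE) (a μ) (b μ)
        = (if μ = ν then B else matE) (a μ) (b μ) := fun μ hμ => by
    rw [if_neg (Finset.mem_erase.mp hμ).1, if_neg (Finset.mem_erase.mp hμ).1]
  rw [Finset.prod_congr rfl h]
  simp only [if_true, Matrix.smul_apply, smul_eq_mul]
  ring

lemma Lone_add {m : ℕ} (ν : Fin m) (B C : Matrix (Fin 2) (Fin 2) ℂ) :
    Lone ν (B + C) = Lone ν B + Lone ν C := by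
  ext a b
  simp only [Lone, tprod, Matrix.of_apply, Matrix.add_apply]
  rw [← Finset.prod_erase_mul _ _ (Finset.mem_univ ν),
      ← Finset.prod_erase_mul _ _ (Finset.mem_univ ν),
      ← Finset.prod_erase_mul _ _ (Finset.mem_univ ν)]
  have h1 : ∀ μ ∈ Finset.univ.erase ν,
      (if μ = ν then B + C else matE) (a μ) (b μ)
        = (if μ = ν then B else matE) (a μ) (b μ) := fun μ hμ => by
    rw [if_neg (Finset.mem_erase.mp hμ).1, if_neg (Finset.mem_erase.mp hμ).1]
  have h2 : ∀ μ ∈ Finset.univ.erase ν,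
      (if μ = ν then C else matE) (a μ) (b μ)
        = (if μ = ν then B else matE) (a μ) (b μ) := fun μ hμ => by
    rw [if_neg (Finset.mem_erase.mp hμ).1, if_neg (Finset.mem_erase.mp hμ).1]
  rw [Finset.prod_congr rfl h1, Finset.prod_congr rfl h2]
  simp only [if_true, Matrix.add_apply]
  ring

lemma Lone_matE {m : ℕ} (ν : Fin m) : Lone ν matE = 1 := by
  have h : (fun μ : Fin m => if μ = ν then matE else matE)
      = fun _ => (1 : Matrix (Fin 2) (Fin 2) ℂ) := funext fun μ => by rw [ite_self, matE]
  rw [Lone, h, tprod_one]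

lemma Lone_mem {m : ℕ} {A : Subalgebra ℂ (Matrix (Fin m → Fin 2) (Fin m → Fin 2) ℂ)}
    (hT : ∀ ν, Lone ν matT ∈ A) (hG1 : ∀ ν, Lone ν matG1 ∈ A)
    (hG2 : ∀ ν, Lone ν matG2 ∈ A) (ν : Fin m) (B : Matrix (Fin 2) (Fin 2) ℂ) :
    Lone ν B ∈ A := by
  have hB := mem_span4 B
  induction hB using Submodule.span_induction with
  | mem x hx =>
    rcases hx with h | h | h | h
    · rw [h, Lone_matE]; exact A.one_mem
    · rw [h]; exact hT ν
    · rw [h]; exact hG1 ν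
    · rw [Set.mem_singleton_iff.mp h]; exact hG2 ν
  | zero =>
    have : Lone ν (0 : Matrix (Fin 2) (Fin 2) ℂ) = 0 := by
      have := Lone_smul ν 0 (0 : Matrix (Fin 2) (Fin 2) ℂ)
      simpa using this
    rw [this]; exact A.toSubmodule.zero_mem
  | add x y _ _ hx hy => rw [Lone_add]; exact A.add_mem hx hy
  | smul c x _ hx => rw [Lone_smul]; exact A.smul_mem hx c

lemma tprod_stdBasisMatrix {m : ℕ} (a b : Fin m → Fin 2) :
    Matrix.single a b (1 : ℂ)
      = tprod (fun ν => Matrix.single (a ν) (b ν) (1 : ℂ)) := by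
  ext x y
  simp only [tprod, Matrix.of_apply, Matrix.single]
  by_cases h : a = x ∧ b = y
  · rw [if_pos h]
    rw [Finset.prod_congr rfl (fun ν _ => by
      rw [if_pos ⟨congrFun h.1 ν, congrFun h.2 ν⟩] : ∀ _, _), Finset.prod_const_one]
  · rw [if_neg h]
    rw [not_and_or] at h
    rcases h with h | h
    · obtain ⟨ν, hν⟩ := Function.ne_iff.mp h
      exact (Finset.prod_eq_zero (Finset.mem_univ ν) (by rw [if_neg (by tauto)])).symm
    · obtain ⟨ν, hν⟩ := Function.ne_iff.mp h
      exact (Finset.prod_eq_zero (Finset.mem_univ ν) (by rw [if_neg (by tauto)])).symm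

lemma subalgebra_eq_top {m : ℕ}
    {A : Subalgebra ℂ (Matrix (Fin m → Fin 2) (Fin m → Fin 2) ℂ)}
    (hT : ∀ ν, Lone ν matT ∈ A) (hG1 : ∀ ν, Lone ν matG1 ∈ A)
    (hG2 : ∀ ν, Lone ν matG2 ∈ A) :
    A = ⊤ := by
  have key : ∀ k : ℕ, ∀ M : Fin m → Matrix (Fin 2) (Fin 2) ℂ,
      (∀ ν : Fin m, k ≤ ν.val → M ν = matE) → tprod M ∈ A := by
    intro k
    induction k with
    | zero =>
      intro M hM
      have : M = fun _ => (1 : Matrix (Fin 2) (Fin 2) ℂ) :=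
        funext fun ν => by rw [hM ν (Nat.zero_le _), matE]
      rw [this, tprod_one]; exact A.one_mem
    | succ k ih =>
      intro M hM
      by_cases hk : k < m
      · set ν₀ : Fin m := ⟨k, hk⟩
        have hsplit : tprod M
            = tprod (Function.update M ν₀ matE) * Lone ν₀ (M ν₀) := by
          rw [Lone, tprod_mul]
          refine (congrArg tprod (funext fun μ => ?_)).symm
          by_cases hμ : μ = ν₀
          · subst hμ; rw [Function.update_self, if_pos rfl, matE, one_mul]
          · rw [Function.update_of_ne hμ, if_neg hμ, matE, mul_one]
        rw [hsplit]
        refine A.mul_mem (ih _ ?_) (Lone_mem hT hG1 hG2 _ _)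
        intro ν hν
        by_cases hμ : ν = ν₀
        · subst hμ; rw [Function.update_self]
        · rw [Function.update_of_ne hμ]
          exact hM ν (by
            rcases Nat.lt_or_ge ν.val (k+1) with h | h
            · exact absurd (Fin.ext (by omega : ν.val = k)) hμ
            · exact h)
      · exact ih M (fun ν h => absurd (lt_of_le_of_lt h ν.isLt) hk)
  rw [Algebra.eq_top_iff]
  intro X
  rw [Matrix.matrix_eq_sum_single X]
  refine A.toSubmodule.sum_mem fun a _ => A.toSubmodule.sum_mem fun b _ => ?_
  have hX : Matrix.single a b (X a b) = (X a b) • Matrix.single a b (1 : ℂ) := by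
    rw [Matrix.smul_single, smul_eq_mul, mul_one]
  rw [hX]
  refine A.smul_mem ?_ _
  rw [tprod_stdBasisMatrix]
  exact key m _ (fun ν hν => absurd ν.isLt (not_lt.mpr hν))

def GG {m : ℕ} (g : Matrix (Fin 2) (Fin 2) ℂ) (ν : Fin m) :
    Matrix (Fin m → Fin 2) (Fin m → Fin 2) ℂ :=
  tprod (fun μ => if μ.val < ν.val then matT else if μ = ν then g else matE)

def Tb (m : ℕ) (k : ℕ) : Matrix (Fin m → Fin 2) (Fin m → Fin 2) ℂ :=
  tprod (fun μ : Fin m => if μ.val < k then matT else matE)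

lemma Tb_zero (m : ℕ) : Tb m 0 = 1 := by
  have h : (fun μ : Fin m => if μ.val < 0 then matT else matE)
      = fun _ => (1 : Matrix (Fin 2) (Fin 2) ℂ) :=
    funext fun μ => by rw [if_neg (Nat.not_lt_zero _), matE]
  rw [Tb, h, tprod_one]

lemma Tb_succ (m k : ℕ) (hk : k < m) :
    Tb m (k + 1) = Tb m k * Lone ⟨k, hk⟩ matT := by
  rw [Tb, Tb, Lone, tprod_mul]
  refine congrArg tprod (funext fun μ => ?_)
  simp only [Fin.ext_iff]
  split_ifs <;> first
    | omega
    | simp_all [matE, matT_sq, one_mul, mul_one]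
    | (exfalso; omega)

lemma Tb_ge (m k : ℕ) (hk : m ≤ k) : Tb m (k + 1) = Tb m k := by
  refine congrArg tprod (funext fun μ => ?_)
  rw [if_pos (by have := μ.isLt; omega), if_pos (by have := μ.isLt; omega)]

lemma Tb_mul_GG {m : ℕ} (g : Matrix (Fin 2) (Fin 2) ℂ) (ν : Fin m) :
    Tb m ν.val * GG g ν = Lone ν g := by
  rw [Tb, GG, Lone, tprod_mul]
  refine (congrArg tprod (funext fun μ => ?_)).symm
  simp only [Fin.ext_iff]
  split_ifs <;> first
    | omega
    | simp_all [matE, matT_sq, one_mul, mul_one]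
    | (exfalso; omega)

lemma GG_mul_GG {m : ℕ} (ν : Fin m) :
    GG matG1 ν * GG matG2 ν = (-Complex.I) • Lone ν matT := by
  rw [GG, GG, tprod_mul, ← Lone_smul, Lone]
  refine congrArg tprod (funext fun μ => ?_)
  simp only [Fin.ext_iff]
  split_ifs <;> first
    | omega
    | simp_all [matE, matT_sq, matG1_mul_G2, one_mul, mul_one]
    | (exfalso; omega)

lemma Phi_eq_GG1 {n : ℕ} (hn : n % 2 = 0) (ε : Fin n → ℝ) (ν : Fin (n / 2)) :
    Phi ε ⟨2 * ν.val, by have := ν.isLt; omega⟩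
        = tau ε ⟨2 * ν.val, by have := ν.isLt; omega⟩ • GG matG1 ν := by
  rw [Phi_eq_even ε _ (by simp only; have := ν.isLt; omega)]
  congr 1
  rw [GG]
  refine congrArg tprod (funext fun μ => ?_)
  simp only [FF]
  have h1 : 2 * ν.val / 2 = ν.val := by omega
  have h2 : 2 * ν.val % 2 = 0 := by omega
  simp only [h1, h2, Fin.ext_iff]
  split_ifs <;> first | rfl | omega | (exfalso; omega) | simp_all

lemma Phi_eq_GG2 {n : ℕ} (hn : n % 2 = 0) (ε : Fin n → ℝ) (ν : Fin (n / 2)) :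
    Phi ε ⟨2 * ν.val + 1, by have := ν.isLt; omega⟩
        = tau ε ⟨2 * ν.val + 1, by have := ν.isLt; omega⟩ • GG matG2 ν := by
  rw [Phi_eq_even ε _ (by simp only; have := ν.isLt; omega)]
  congr 1
  rw [GG]
  refine congrArg tprod (funext fun μ => ?_)
  simp only [FF]
  have h1 : (2 * ν.val + 1) / 2 = ν.val := by omega
  have h2 : (2 * ν.val + 1) % 2 = 1 := by omega
  simp only [h1, h2, Fin.ext_iff]
  split_ifs <;> first | rfl | omega | (exfalso; omega) | simp_all

end

end Paper
namespace Paper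

/-- The complexified Clifford algebra `Cl^ℂ_{p,q}`: the Clifford algebra over `ℂ` of the
quadratic form `Q(x) = -⟨x,x⟩_{p,q} = -∑ ε_i x_i²` on `ℂⁿ`. -/
noncomputable def Qc {n : ℕ} (ε : Fin n → ℝ) : QuadraticForm ℂ (Fin n → ℂ) :=
  QuadraticMap.weightedSumSquares ℂ (fun i => -(ε i : ℂ))

noncomputable section

lemma cliffC_mul_self {n : ℕ} (hn : n % 2 = 0) (ε : Fin n → ℝ)
    (hε : ∀ i, ε i = 1 ∨ ε i = -1) (x : Fin n → ℂ) :
    cliffC ε x * cliffC ε x = algebraMap ℂ _ (Qc ε x) := by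
  have hA1 : cliffC ε x * cliffC ε x
      = ∑ i, ∑ j, (x i * x j) • (Phi ε i * Phi ε j) := by
    unfold cliffC
    rw [Finset.sum_mul_sum]
    exact Finset.sum_congr rfl fun i _ => Finset.sum_congr rfl fun j _ =>
      smul_mul_smul_comm _ _ _ _
  have hA2 : cliffC ε x * cliffC ε x
      = ∑ i, ∑ j, (x i * x j) • (Phi ε j * Phi ε i) := by
    rw [hA1, Finset.sum_comm]
    refine Finset.sum_congr rfl fun j _ => Finset.sum_congr rfl fun i _ => ?_
    rw [mul_comm (x j)]
  have key : cliffC ε x * cliffC ε x + cliffC ε x * cliffC ε x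
      = algebraMap ℂ _ (Qc ε x) + algebraMap ℂ _ (Qc ε x) := by
    nth_rewrite 2 [hA2]
    nth_rewrite 1 [hA1]
    rw [← Finset.sum_add_distrib]
    have hterm : ∀ i ∈ Finset.univ, ((∑ j, (x i * x j) • (Phi ε i * Phi ε j))
          + (∑ j, (x i * x j) • (Phi ε j * Phi ε i)))
        = (x i * x i * (-2) * (ε i : ℂ)) • (1 : Matrix _ _ ℂ) := by
      intro i _
      rw [← Finset.sum_add_distrib]
      rw [Finset.sum_eq_single i]
      · rw [← smul_add]
        have hs : Phi ε i * Phi ε i + Phi ε i * Phi ε i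
            = ((-2 : ℂ) * (ε i : ℂ)) • (1 : Matrix _ _ ℂ) := by
          rw [Phi_sq hn ε hε, ← add_smul]
          ring_nf
        rw [hs, smul_smul]
        ring_nf
      · intro j _ hji
        rw [← smul_add, Phi_anticomm hn ε (Ne.symm hji), neg_add_cancel, smul_zero]
      · intro h; exact absurd (Finset.mem_univ i) h
    rw [Finset.sum_congr rfl hterm]
    have hq : Qc ε x = ∑ i, -(ε i : ℂ) * (x i * x i) := by
      simp [Qc, QuadraticMap.weightedSumSquares_apply, smul_eq_mul]
    rw [hq, map_sum, ← Finset.sum_add_distrib]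
    refine Finset.sum_congr rfl fun i _ => ?_
    rw [Algebra.algebraMap_eq_smul_one, ← add_smul]
    congr 1
    ring
  have h2 : (2 : ℂ) • (cliffC ε x * cliffC ε x) = (2 : ℂ) • (algebraMap ℂ _ (Qc ε x)) := by
    rw [two_smul, two_smul]; exact key
  exact smul_right_injective _ (by norm_num : (2 : ℂ) ≠ 0) h2
section CliffSpan

variable {n : ℕ} (ε : Fin n → ℝ)

def eC (i : Fin n) : CliffordAlgebra (Qc ε) :=
  CliffordAlgebra.ι (Qc ε) (Pi.single i 1)

def eSet (s : Finset (Fin n)) : CliffordAlgebra (Qc ε) :=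
  ((s.sort (· ≤ ·)).map (eC ε)).prod

lemma Qc_single (i : Fin n) : Qc ε (Pi.single i 1) = -(ε i : ℂ) := by
  rw [Qc, QuadraticMap.weightedSumSquares_apply]
  rw [Finset.sum_eq_single i]
  · simp
  · intro j _ hji; simp [Pi.single_eq_of_ne hji]
  · intro h; exact absurd (Finset.mem_univ i) h

lemma Qc_ortho {i j : Fin n} (hij : i ≠ j) :
    (Qc ε).IsOrtho (Pi.single i 1) (Pi.single j 1) := by
  rw [QuadraticMap.isOrtho_def]
  rw [Qc, QuadraticMap.weightedSumSquares_apply, QuadraticMap.weightedSumSquares_apply,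
    QuadraticMap.weightedSumSquares_apply]
  rw [← Finset.sum_add_distrib]
  refine Finset.sum_congr rfl fun k _ => ?_
  simp only [Pi.add_apply, Pi.single_apply, smul_eq_mul]
  by_cases hki : k = i
  · by_cases hkj : k = j
    · exact absurd (hki.symm.trans hkj) hij
    · simp [hki, hkj, hij, Ne.symm hij]
  · by_cases hkj : k = j
    · simp [hki, hkj, hij, Ne.symm hij]
    · simp [hki, hkj]

lemma eC_mul_eC_self (i : Fin n) :
    eC ε i * eC ε i = algebraMap ℂ _ (-(ε i : ℂ)) := by
  rw [eC, CliffordAlgebra.ι_sq_scalar, Qc_single]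

lemma eC_anticomm {i j : Fin n} (hij : i ≠ j) :
    eC ε i * eC ε j = -(eC ε j * eC ε i) :=
  CliffordAlgebra.ι_mul_ι_comm_of_isOrtho (Qc_ortho ε hij)

lemma eSet_empty : eSet ε ∅ = 1 := by simp [eSet]

lemma eSet_singleton (i : Fin n) : eSet ε {i} = eC ε i := by
  simp [eSet, Finset.sort_singleton]

lemma eSet_insert {s : Finset (Fin n)} {i : Fin n} (h : ∀ x ∈ s, i < x) :
    eSet ε (insert i s) = eC ε i * eSet ε s := by
  have hns : i ∉ s := fun hi => lt_irrefl i (h i hi)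
  rw [eSet, Finset.sort_insert (· ≤ ·) (fun b hb => le_of_lt (h b hb)) hns,
    List.map_cons, List.prod_cons, eSet]

lemma eSet_min {s : Finset (Fin n)} (hs : s.Nonempty) :
    eSet ε s = eC ε (s.min' hs) * eSet ε (s.erase (s.min' hs)) := by
  have h : ∀ x ∈ s.erase (s.min' hs), s.min' hs < x := fun x hx =>
    lt_of_le_of_ne (s.min'_le x (Finset.mem_of_mem_erase hx))
      (Ne.symm (Finset.ne_of_mem_erase hx))
  rw [← eSet_insert ε h, Finset.insert_erase (s.min'_mem hs)]

end CliffSpan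

section CliffSpan2

variable {n : ℕ} (ε : Fin n → ℝ)

lemma eC_mul_eSet_mem : ∀ (N : ℕ) (s : Finset (Fin n)), s.card ≤ N → ∀ i : Fin n,
    eC ε i * eSet ε s ∈ Submodule.span ℂ (eSet ε '' {t | t ⊆ insert i s}) := by
  intro N
  induction N with
  | zero =>
    intro s hs i
    rw [Finset.card_eq_zero.mp (Nat.le_zero.mp hs), eSet_empty, mul_one]
    exact Submodule.subset_span ⟨{i}, by simp, eSet_singleton ε i⟩
  | succ N ih =>
    intro s hs i
    rcases Finset.eq_empty_or_nonempty s with rfl | hne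
    · rw [eSet_empty, mul_one]
      exact Submodule.subset_span ⟨{i}, by simp, eSet_singleton ε i⟩
    · set j := s.min' hne with hj
      rcases lt_trichotomy i j with hij | hij | hij
      · have hall : ∀ x ∈ s, i < x := fun x hx => lt_of_lt_of_le hij (s.min'_le x hx)
        rw [← eSet_insert ε hall]
        exact Submodule.subset_span ⟨insert i s, by simp, rfl⟩
      · rw [hij, eSet_min ε hne, ← mul_assoc, eC_mul_eC_self, Algebra.algebraMap_eq_smul_one,
          smul_mul_assoc, one_mul]
        refine Submodule.smul_mem _ _ (Submodule.subset_span ⟨s.erase j, ?_, rfl⟩)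
        exact fun x hx => Finset.mem_insert_of_mem (Finset.mem_of_mem_erase hx)
      · have hjmem : j ∈ s := s.min'_mem hne
        rw [eSet_min ε hne, ← mul_assoc, eC_anticomm ε (ne_of_gt hij), neg_mul, mul_assoc]
        have hcard : (s.erase j).card ≤ N := by
          have := Finset.card_erase_of_mem hjmem
          omega
        have hmem := ih (s.erase j) hcard i
        have hstep : ∀ y ∈ eSet ε '' {t | t ⊆ insert i (s.erase j)},
            eC ε j * y ∈ Submodule.span ℂ (eSet ε '' {t | t ⊆ insert i s}) := by
          rintro y ⟨t, ht, rfl⟩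
          have hjt : ∀ x ∈ t, j < x := by
            intro x hx
            rcases Finset.mem_insert.mp (ht hx) with rfl | hx'
            · exact hij
            · exact lt_of_le_of_ne (s.min'_le x (Finset.mem_of_mem_erase hx'))
                (Ne.symm (Finset.ne_of_mem_erase hx'))
          rw [← eSet_insert ε hjt]
          refine Submodule.subset_span ⟨insert j t, ?_, rfl⟩
          intro x hx
          rcases Finset.mem_insert.mp hx with rfl | hx'
          · exact Finset.mem_insert_of_mem hjmem
          · rcases Finset.mem_insert.mp (ht hx') with rfl | hx''
            · exact Finset.mem_insert_self _ _
            · exact Finset.mem_insert_of_mem (Finset.mem_of_mem_erase hx'')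
        have : eC ε j * (eC ε i * eSet ε (s.erase j))
            ∈ Submodule.span ℂ (eSet ε '' {t | t ⊆ insert i s}) := by
          refine Submodule.span_induction ?_ ?_ ?_ ?_ hmem
          · exact hstep
          · rw [mul_zero]; exact Submodule.zero_mem _
          · intro x y _ _ hx hy; rw [mul_add]; exact Submodule.add_mem _ hx hy
          · intro c x _ hx; rw [mul_smul_comm]; exact Submodule.smul_mem _ _ hx
        simpa using Submodule.neg_mem _ this

lemma eC_mul_mem {x : CliffordAlgebra (Qc ε)}
    (hx : x ∈ Submodule.span ℂ (Set.range (eSet ε))) (i : Fin n) :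
    eC ε i * x ∈ Submodule.span ℂ (Set.range (eSet ε)) := by
  refine Submodule.span_induction ?_ ?_ ?_ ?_ hx
  · rintro y ⟨s, rfl⟩
    refine Submodule.span_le.mpr ?_ (eC_mul_eSet_mem ε s.card s le_rfl i)
    rintro z ⟨t, _, rfl⟩
    exact Submodule.subset_span ⟨t, rfl⟩
  · rw [mul_zero]; exact Submodule.zero_mem _
  · intro a b _ _ ha hb; rw [mul_add]; exact Submodule.add_mem _ ha hb
  · intro c a _ ha; rw [mul_smul_comm]; exact Submodule.smul_mem _ _ ha

lemma list_mul_mem (l : List (Fin n)) {x : CliffordAlgebra (Qc ε)}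
    (hx : x ∈ Submodule.span ℂ (Set.range (eSet ε))) :
    (l.map (eC ε)).prod * x ∈ Submodule.span ℂ (Set.range (eSet ε)) := by
  induction l with
  | nil => simpa using hx
  | cons i l ih =>
    rw [List.map_cons, List.prod_cons, mul_assoc]
    exact eC_mul_mem ε (ih) i

lemma mul_mem_span {x y : CliffordAlgebra (Qc ε)}
    (hx : x ∈ Submodule.span ℂ (Set.range (eSet ε)))
    (hy : y ∈ Submodule.span ℂ (Set.range (eSet ε))) :
    x * y ∈ Submodule.span ℂ (Set.range (eSet ε)) := by
  refine Submodule.span_induction ?_ ?_ ?_ ?_ hx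
  · rintro z ⟨s, rfl⟩
    exact list_mul_mem ε _ hy
  · rw [zero_mul]; exact Submodule.zero_mem _
  · intro a b _ _ ha hb; rw [add_mul]; exact Submodule.add_mem _ ha hb
  · intro c a _ ha; rw [smul_mul_assoc]; exact Submodule.smul_mem _ _ ha

lemma span_eSet_eq_top : Submodule.span ℂ (Set.range (eSet ε)) = ⊤ := by
  rw [Submodule.eq_top_iff']
  intro x
  induction x using CliffordAlgebra.induction with
  | algebraMap r =>
    rw [Algebra.algebraMap_eq_smul_one]
    refine Submodule.smul_mem _ _ (Submodule.subset_span ⟨∅, (eSet_empty ε)⟩)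
  | ι x =>
    have hx : x = ∑ i, x i • (Pi.single i (1 : ℂ) : Fin n → ℂ) := by
      funext j
      rw [Finset.sum_apply]
      rw [Finset.sum_eq_single j]
      · simp
      · intro i _ hij; simp [Pi.single_eq_of_ne (Ne.symm hij)]
      · intro h; exact absurd (Finset.mem_univ j) h
    rw [hx, map_sum]
    refine Submodule.sum_mem _ fun i _ => ?_
    rw [_root_.map_smul]
    exact Submodule.smul_mem _ _
      (Submodule.subset_span ⟨{i}, (eSet_singleton ε i).symm ▸ rfl⟩)
  | mul a b ha hb => exact mul_mem_span ε ha hb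
  | add a b ha hb => exact Submodule.add_mem _ ha hb

lemma cliffordFinite : Module.Finite ℂ (CliffordAlgebra (Qc ε)) := by
  classical
  refine ⟨⟨Finset.univ.image (eSet ε), ?_⟩⟩
  rw [Finset.coe_image, Finset.coe_univ, Set.image_univ]
  exact span_eSet_eq_top ε

lemma clifford_finrank_le :
    Module.finrank ℂ (CliffordAlgebra (Qc ε)) ≤ 2 ^ n := by
  have := finrank_le_of_span_eq_top (v := eSet ε) (span_eSet_eq_top ε)
  simpa [Fintype.card_finset] using this

end CliffSpan2

end

theorem clifford_relations_and_iso_even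
    (n m p : ℕ) (hn : n = 2 * m)
    (ε : Fin n → ℝ) (hε : ∀ i, ε i = 1 ∨ ε i = -1)
    (hp : (negSet ε).card = p) :
    (∀ i j : Fin n,
        Phi ε i * Phi ε j + Phi ε j * Phi ε i
          = ((-2 : ℂ) * (if i = j then (ε i : ℂ) else 0)) •
              (1 : Matrix (Fin (n / 2) → Fin 2) (Fin (n / 2) → Fin 2) ℂ)) ∧
    ∃ F : CliffordAlgebra (Qc ε) →ₐ[ℂ]
        Matrix (Fin (n / 2) → Fin 2) (Fin (n / 2) → Fin 2) ℂ,
      (∀ x : Fin n → ℂ, F (CliffordAlgebra.ι (Qc ε) x) = cliffC ε x) ∧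
      Function.Bijective F := by
  have hn2 : n % 2 = 0 := by omega
  have hrel : ∀ i j : Fin n,
      Phi ε i * Phi ε j + Phi ε j * Phi ε i
        = ((-2 : ℂ) * (if i = j then (ε i : ℂ) else 0)) •
            (1 : Matrix (Fin (n / 2) → Fin 2) (Fin (n / 2) → Fin 2) ℂ) := by
    intro i j
    by_cases hij : i = j
    · subst hij
      rw [if_pos rfl, Phi_sq hn2 ε hε, ← add_smul]
      congr 1
      ring
    · rw [if_neg hij, Phi_anticomm hn2 ε hij, neg_add_cancel]
      rw [mul_zero, zero_smul]
  refine ⟨hrel, ?_⟩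
  -- the linear map underlying Clifford multiplication
  set f : (Fin n → ℂ) →ₗ[ℂ] Matrix (Fin (n / 2) → Fin 2) (Fin (n / 2) → Fin 2) ℂ :=
    ∑ i, (LinearMap.proj (R := ℂ) (φ := fun _ : Fin n => ℂ) i).smulRight (Phi ε i) with hf
  have hfapp : ∀ x, f x = cliffC ε x := fun x => by
    rw [hf, cliffC, LinearMap.sum_apply]
    exact Finset.sum_congr rfl fun i _ => by
      rw [LinearMap.smulRight_apply, LinearMap.proj_apply]
  have hcond : ∀ x, f x * f x = algebraMap ℂ _ (Qc ε x) := fun x => by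
    rw [hfapp]
    exact cliffC_mul_self hn2 ε hε x
  set F := CliffordAlgebra.lift (Qc ε) ⟨f, hcond⟩ with hF
  have hFι : ∀ x : Fin n → ℂ, F (CliffordAlgebra.ι (Qc ε) x) = cliffC ε x := fun x => by
    rw [hF, CliffordAlgebra.lift_ι_apply f hcond x, hfapp]
  have hsurj : Function.Surjective F := by
      have hPhi : ∀ i : Fin n, Phi ε i ∈ F.range := by
        intro i
        refine ⟨CliffordAlgebra.ι (Qc ε) (Pi.single i 1), ?_⟩
        show F (CliffordAlgebra.ι (Qc ε) (Pi.single i 1)) = Phi ε i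
        rw [hFι]
        unfold cliffC
        rw [Finset.sum_eq_single i]
        · simp
        · intro j _ hji; simp [Pi.single_eq_of_ne hji]
        · intro h; exact absurd (Finset.mem_univ i) h
      have hGG1 : ∀ ν : Fin (n / 2), GG matG1 ν ∈ F.range := by
        intro ν
        have h := hPhi ⟨2 * ν.val, by have := ν.isLt; omega⟩
        rw [Phi_eq_GG1 hn2 ε ν] at h
        have h2 := F.range.smul_mem h (tau ε ⟨2 * ν.val, by have := ν.isLt; omega⟩)⁻¹
        rwa [inv_smul_smul₀ (tau_ne_zero ε _)] at h2
      have hGG2 : ∀ ν : Fin (n / 2), GG matG2 ν ∈ F.range := by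
        intro ν
        have h := hPhi ⟨2 * ν.val + 1, by have := ν.isLt; omega⟩
        rw [Phi_eq_GG2 hn2 ε ν] at h
        have h2 := F.range.smul_mem h (tau ε ⟨2 * ν.val + 1, by have := ν.isLt; omega⟩)⁻¹
        rwa [inv_smul_smul₀ (tau_ne_zero ε _)] at h2
      have hT : ∀ ν : Fin (n / 2), Lone ν matT ∈ F.range := by
        intro ν
        have h := F.range.mul_mem (hGG1 ν) (hGG2 ν)
        rw [GG_mul_GG] at h
        have h2 := F.range.smul_mem h Complex.I
        rwa [smul_smul, mul_neg, Complex.I_mul_I, neg_neg, one_smul] at h2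
      have hTb : ∀ k : ℕ, Tb (n / 2) k ∈ F.range := by
        intro k
        induction k with
        | zero => rw [Tb_zero]; exact F.range.one_mem
        | succ k ih =>
          by_cases hk : k < n / 2
          · rw [Tb_succ _ _ hk]; exact F.range.mul_mem ih (hT ⟨k, hk⟩)
          · rw [Tb_ge _ _ (not_lt.mp hk)]; exact ih
      have hG1 : ∀ ν : Fin (n / 2), Lone ν matG1 ∈ F.range := by
        intro ν
        rw [← Tb_mul_GG]
        exact F.range.mul_mem (hTb ν.val) (hGG1 ν)
      have hG2 : ∀ ν : Fin (n / 2), Lone ν matG2 ∈ F.range := by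
        intro ν
        rw [← Tb_mul_GG]
        exact F.range.mul_mem (hTb ν.val) (hGG2 ν)
      have htop : F.range = ⊤ := subalgebra_eq_top hT hG1 hG2
      exact F.range_eq_top.mp htop
  have hinj : Function.Injective F := by
    haveI : Module.Finite ℂ (CliffordAlgebra (Qc ε)) := cliffordFinite ε
    have hle := clifford_finrank_le ε
    have hmat : Module.finrank ℂ
        (Matrix (Fin (n / 2) → Fin 2) (Fin (n / 2) → Fin 2) ℂ) = 2 ^ n := by
      rw [Module.finrank_matrix, Module.finrank_self, mul_one]
      have hcard : Fintype.card (Fin (n / 2) → Fin 2) = 2 ^ (n / 2) := by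
        simp [Fintype.card_fun]
      rw [hcard, ← pow_add]
      congr 1
      omega
    have hsurj' : Function.Surjective F.toLinearMap := hsurj
    have hrange : LinearMap.range F.toLinearMap = ⊤ := LinearMap.range_eq_top.mpr hsurj'
    have hrk := LinearMap.finrank_range_add_finrank_ker F.toLinearMap
    rw [hrange, finrank_top, hmat] at hrk
    have hker0 : Module.finrank ℂ (LinearMap.ker F.toLinearMap) = 0 := by omega
    have hker : LinearMap.ker F.toLinearMap = ⊥ := Submodule.finrank_eq_zero.mp hker0
    exact LinearMap.ker_eq_bot.mp hker
  exact ⟨F, hFι, hinj, hsurj⟩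


end Paper
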